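/- Let γ ∈ (-3, 0]. There exists a constant c > 0 such that for every measurable F : ℝ³ → ℝ with F ≥ 0, ∫_{ℝ³} F(v_*) dv_* ≥ 1/2, and ∫_{ℝ³} F(v_*)·(1+|v_*|²) dv_* ≤ 4, one has for all v ∈ ℝ³: ∫_{ℝ³} |v - v_*|^γ F(v_*) dv_* ≥ c·⟨v⟩^γ. -/
import Mathlib

open MeasureTheory

noncomputable def jb (v : EuclideanSpace ℝ (Fin 3)) : ℝ := Real.sqrt (1 + ‖v‖ ^ 2)

lemma jb_pos (v : EuclideanSpace ℝ (Fin 3)) : 0 < jb v :=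
  Real.sqrt_pos.mpr (by positivity)

lemma one_le_jb (v : EuclideanSpace ℝ (Fin 3)) : 1 ≤ jb v := by
  unfold jb
  exact (Real.le_sqrt zero_le_one (by positivity)).mpr (by nlinarith [sq_nonneg ‖v‖])

lemma norm_le_jb (v : EuclideanSpace ℝ (Fin 3)) : ‖v‖ ≤ jb v := by
  unfold jb
  exact (Real.le_sqrt (norm_nonneg v) (by positivity)).mpr (by nlinarith [sq_nonneg ‖v‖])

theorem stmt12 (γ : ℝ) (hγ1 : -3 < γ) (hγ2 : γ ≤ 0) :
    ∃ c : ℝ, 0 < c ∧ ∀ F : EuclideanSpace ℝ (Fin 3) → ℝ, Measurable F → (∀ v, 0 ≤ F v) →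
      (1/2 : ENNReal) ≤ (∫⁻ v, ENNReal.ofReal (F v)) →
      (∫⁻ v, ENNReal.ofReal (F v * (1 + ‖v‖ ^ 2))) ≤ 4 →
      ∀ v : EuclideanSpace ℝ (Fin 3),
        ENNReal.ofReal (c * jb v ^ γ) ≤ ∫⁻ w, ENNReal.ofReal (‖v - w‖ ^ γ * F w) := by
  refine ⟨(5:ℝ) ^ γ * (1/4), by positivity, ?_⟩
  intro F hF hF0 hmass hmom v
  have hj : (0:ℝ) ≤ (5:ℝ)^γ * jb v ^ γ :=
    mul_nonneg (Real.rpow_nonneg (by norm_num) γ) (Real.rpow_nonneg (jb_pos v).le γ)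
  set S : Set (EuclideanSpace ℝ (Fin 3)) := {w | ‖w‖ ≤ 4} with hS
  have hSmeas : MeasurableSet S := measurableSet_le measurable_norm measurable_const
  -- tail bound
  have htail : (∫⁻ w in Sᶜ, ENNReal.ofReal (F w)) * 17 ≤ 4 := by
    have h1 : (∫⁻ w in Sᶜ, ENNReal.ofReal (F w)) * 17
        = ∫⁻ w in Sᶜ, ENNReal.ofReal (F w) * 17 := by
      rw [lintegral_mul_const'' _ (hF.ennreal_ofReal.aemeasurable.restrict)]
    rw [h1]
    calc ∫⁻ w in Sᶜ, ENNReal.ofReal (F w) * 17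
        ≤ ∫⁻ w in Sᶜ, ENNReal.ofReal (F w * (1 + ‖w‖^2)) := by
          refine setLIntegral_mono' hSmeas.compl (fun w hw => ?_)
          have hw4 : (4:ℝ) < ‖w‖ := by simpa [hS] using hw
          rw [show (17:ENNReal) = ENNReal.ofReal 17 by norm_num,
            ← ENNReal.ofReal_mul (hF0 w)]
          have h17 : (17:ℝ) ≤ 1 + ‖w‖^2 := by nlinarith
          exact ENNReal.ofReal_le_ofReal (mul_le_mul_of_nonneg_left h17 (hF0 w))
      _ ≤ ∫⁻ w, ENNReal.ofReal (F w * (1 + ‖w‖^2)) := setLIntegral_le_lintegral _ _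
      _ ≤ 4 := hmom
  have htail' : (∫⁻ w in Sᶜ, ENNReal.ofReal (F w)) ≤ 4 / 17 := by
    rw [ENNReal.le_div_iff_mul_le (by norm_num) (by norm_num)]
    exact htail
  have hsplit : (∫⁻ w in S, ENNReal.ofReal (F w)) + (∫⁻ w in Sᶜ, ENNReal.ofReal (F w))
      = ∫⁻ w, ENNReal.ofReal (F w) := lintegral_add_compl _ hSmeas
  have hcore : (4:ENNReal)⁻¹ ≤ ∫⁻ w in S, ENNReal.ofReal (F w) := by
    by_contra h
    push_neg at h
    have htop : (∫⁻ w in Sᶜ, ENNReal.ofReal (F w)) ≠ ⊤ :=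
      (htail'.trans_lt (ENNReal.div_lt_top (by norm_num) (by norm_num))).ne
    have hlt : (∫⁻ v, ENNReal.ofReal (F v)) < 4⁻¹ + 4/17 :=
      hsplit ▸ ENNReal.add_lt_add_of_lt_of_le htop h htail'
    have h2 : (4:ENNReal)⁻¹ + 4/17 ≤ 1/2 := by
      rw [show (4:ENNReal)⁻¹ = ENNReal.ofReal (1/4) by norm_num [ENNReal.ofReal_div_of_pos],
        show (4:ENNReal)/17 = ENNReal.ofReal (4/17) by norm_num [ENNReal.ofReal_div_of_pos],
        show (1:ENNReal)/2 = ENNReal.ofReal (1/2) by norm_num [ENNReal.ofReal_div_of_pos],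
        ← ENNReal.ofReal_add (by norm_num) (by norm_num)]
      exact ENNReal.ofReal_le_ofReal (by norm_num)
    exact absurd (hmass.trans_lt (hlt.trans_le h2)) (lt_irrefl _)
  -- a.e. key pointwise bound
  have hae : ∀ᵐ w : EuclideanSpace ℝ (Fin 3), w ∈ S →
      ENNReal.ofReal ((5:ℝ)^γ * jb v ^ γ) * ENNReal.ofReal (F w)
        ≤ ENNReal.ofReal (‖v - w‖ ^ γ * F w) := by
    have hne : ∀ᵐ w : EuclideanSpace ℝ (Fin 3), w ≠ v := by
      rw [ae_iff]
      simp only [ne_eq, not_not, Set.setOf_eq_eq_singleton]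
      exact measure_singleton v
    filter_upwards [hne] with w hne hw
    have hvw : 0 < ‖v - w‖ := by
      simp only [norm_pos_iff, sub_ne_zero]; exact fun h => hne h.symm
    have hle : ‖v - w‖ ≤ 5 * jb v := by
      calc ‖v - w‖ ≤ ‖v‖ + ‖w‖ := norm_sub_le _ _
        _ ≤ jb v + 4 := add_le_add (norm_le_jb v) hw
        _ ≤ jb v + 4 * jb v := by nlinarith [one_le_jb v]
        _ = 5 * jb v := by ring
    have hr : (5 * jb v) ^ γ ≤ ‖v - w‖ ^ γ :=
      Real.rpow_le_rpow_of_nonpos hvw hle hγ2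
    rw [← ENNReal.ofReal_mul hj]
    refine ENNReal.ofReal_le_ofReal ?_
    rw [show (5:ℝ)^γ * jb v ^ γ = (5 * jb v) ^ γ from
      (Real.mul_rpow (by norm_num) (jb_pos v).le).symm]
    exact mul_le_mul_of_nonneg_right hr (hF0 w)
  calc ENNReal.ofReal ((5:ℝ)^γ * (1/4) * jb v ^ γ)
      = ENNReal.ofReal ((5:ℝ)^γ * jb v ^ γ) * (4:ENNReal)⁻¹ := by
        rw [show (5:ℝ)^γ * (1/4) * jb v ^ γ = ((5:ℝ)^γ * jb v ^ γ) * (1/4) by ring,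
          ENNReal.ofReal_mul hj,
          show ENNReal.ofReal (1/4) = (4:ENNReal)⁻¹ by norm_num [ENNReal.ofReal_div_of_pos]]
    _ ≤ ENNReal.ofReal ((5:ℝ)^γ * jb v ^ γ) * ∫⁻ w in S, ENNReal.ofReal (F w) :=
        mul_le_mul_right hcore _
    _ = ∫⁻ w in S, ENNReal.ofReal ((5:ℝ)^γ * jb v ^ γ) * ENNReal.ofReal (F w) := by
        rw [lintegral_const_mul'' _ (hF.ennreal_ofReal.aemeasurable.restrict)]
    _ ≤ ∫⁻ w in S, ENNReal.ofReal (‖v - w‖ ^ γ * F w) :=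
        setLIntegral_mono_ae
          ((((measurable_const.sub measurable_id).norm.pow measurable_const).mul
            hF).ennreal_ofReal.aemeasurable.restrict) hae
    _ ≤ ∫⁻ w, ENNReal.ofReal (‖v - w‖ ^ γ * F w) := setLIntegral_le_lintegral _ _
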